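/- arXiv:1205.3604 — 3 statements merged into one kernel-verified Lean document; each statement's English description precedes it below -/
import Mathlib

section
/- For α, β ∈ Q and all m, k ∈ ℤ, the operators X_m(α) and X_k(β) commute: [X_m(α), X_k(β)] = 0 on V(Γ). -/
open MvPolynomial

noncomputable section

/-- Index of a basis of `𝔭 = ℂ ⊗ Γ`: `Sum.inl i ↔ δᵢ`, `Sum.inr i ↔ dᵢ`. -/
abbrev TIdx (N : ℕ) := Fin N ⊕ Fin N

/-- Variables of the symmetric algebra `S(𝔟₋)`: the variable `(x, k)` represents
`x(−k)` (the level-0 variables are inert dummies). -/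
abbrev TVar (N : ℕ) := TIdx N × ℕ

/-- The symmetric algebra `S(𝔟₋)` (containing `S(𝔞₋)` as the subalgebra generated by
the `δ`-variables). -/
abbrev PolyB (N : ℕ) := MvPolynomial (TVar N) ℂ

/-- The lattice `Γ`, an element being recorded by its `δ`-coordinates and
`d`-coordinates. -/
abbrev Gam (N : ℕ) := (Fin N → ℤ) × (Fin N → ℤ)

/-- The Fock space `V(Γ) = ℂ[Γ] ⊗ S(𝔟₋)`: a formal (finitely supported) sum
`Σ_γ e^γ ⊗ u_γ`. -/
abbrev VGam (N : ℕ) := Gam N →₀ PolyB N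

variable {N : ℕ}

/-- The pairing `(γ, α)` for `γ ∈ Γ` and `α ∈ Q` (given by its `δ`-coordinates);
only the `d`-coordinates of `γ` pair non-trivially with `Q`. -/
def pairQ (γ : Gam N) (α : Fin N → ℤ) : ℤ := ∑ i, γ.2 i * α i

/-- The inclusion `Q → Γ`. -/
def incQ (α : Fin N → ℤ) : Gam N := (α, 0)

/-- The pairing on `Γ`. -/
def pairG (γ γ' : Gam N) : ℤ := ∑ i, (γ.1 i * γ'.2 i + γ.2 i * γ'.1 i)

/-- The creation element `α(−j) ∈ S(𝔞₋)` for `α ∈ Q`, as a polynomial. -/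
def Pa (α : Fin N → ℤ) (j : ℕ) : PolyB N := ∑ i, (α i : ℂ) • X (Sum.inl i, j)

/-- The Schur-like coefficients of the creation exponential:
`exp T₋(α,z) = Σ_{p≥0} SpB α p · z^p`, characterized by `S₀ = 1` and
`p·S_p = Σ_{j=1}^p α(−j)·S_{p−j}` (from differentiating the exponential). -/
def SpB (α : Fin N → ℤ) : ℕ → PolyB N
  | 0 => 1
  | p + 1 =>
      ((p : ℂ) + 1)⁻¹ • ∑ j ∈ Finset.range (p + 1), Pa α (j + 1) * SpB α (p - j)
  decreasing_by omega

/-- The annihilation exponential `exp T₊(α,z)` for `α ∈ Q`: since `T₊(α,z)` is a sum of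
derivations sending each variable to a constant, its exponential is the `ℂ`-algebra
endomorphism determined by `δᵢ(−j) ↦ δᵢ(−j)` and `dᵢ(−j) ↦ dᵢ(−j) − αᵢ z^{−j}`,
with values in Laurent polynomials in `z` over `S(𝔟₋)`. -/
def sigmaA (α : Fin N → ℤ) : PolyB N →ₐ[ℂ] AddMonoidAlgebra (PolyB N) ℤ :=
  aeval fun v =>
    AddMonoidAlgebra.single 0 (X v) -
      (match v with
        | (Sum.inl _, _) => 0
        | (Sum.inr i, k) =>
            if k = 0 then 0
            else AddMonoidAlgebra.single (-(k : ℤ)) (C (α i : ℂ)))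

/-- Extraction of the coefficient of `z^c` from `(exp T₋(α,z)) · ℓ`, for a Laurent
polynomial `ℓ` over `S(𝔟₋)` (with the convention `S_p(α) = 0` for `p < 0`). -/
def coefF (α : Fin N → ℤ) (c : ℤ) (ℓ : AddMonoidAlgebra (PolyB N) ℤ) : PolyB N :=
  Finsupp.sum (show ℤ →₀ PolyB N from ℓ.coeff) fun e p =>
    (if 0 ≤ c - e then SpB α ((c - e).toNat) else 0) * p

/-- The component `X_m(α)` of the vertex operator
`X(α,z) = exp T₋(α,z) · e^α · z^{α(0)} · exp T₊(α,z) = Σ_m X_m(α) z^{−m}` acting on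
`V(Γ)`: on `e^γ ⊗ u` it produces `e^{γ+α}` tensored with the `z^{−m−(γ,α)}`-coefficient
of `exp T₋(α,z) · (exp T₊(α,z) u)`. -/
def XopF (α : Fin N → ℤ) (m : ℤ) (v : VGam N) : VGam N :=
  Finsupp.sum v fun γ u =>
    Finsupp.single (γ + incQ α) (coefF α (-m - pairQ γ α) (sigmaA α u))

/-- The action of `b(k)` on `V(Γ)` for `b ∈ 𝔭` (given by its `δ`- and `d`-coordinates):
for `k < 0` multiplication by the creation element `b(k)`, for `k = 0` the scalar
`(γ, b)`, and for `k > 0` the derivation sending `x(−k) ↦ k⟨b,x⟩`. -/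
def popF (b : (Fin N → ℂ) × (Fin N → ℂ)) (k : ℤ) (v : VGam N) : VGam N :=
  Finsupp.sum v fun γ u =>
    Finsupp.single γ
      (if k < 0 then
        (∑ i, (b.1 i • X (Sum.inl i, (-k).toNat)
               + b.2 i • X (Sum.inr i, (-k).toNat))) * u
      else if k = 0 then
        (∑ i, ((γ.1 i : ℂ) * b.2 i + (γ.2 i : ℂ) * b.1 i)) • u
      else
        ∑ i, (((k : ℂ) * b.2 i) • pderiv (Sum.inl i, k.toNat) u
              + ((k : ℂ) * b.1 i) • pderiv (Sum.inr i, k.toNat) u))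

/-- An element `α ∈ Q` viewed as an element of `𝔭`. -/
def toP (α : Fin N → ℤ) : (Fin N → ℂ) × (Fin N → ℂ) := (fun i => (α i : ℂ), 0)

namespace VCAux
open AddMonoidAlgebra
variable {N : ℕ}

/-- Truncated Schur coefficient. -/
def Tb (α : Fin N → ℤ) (n : ℤ) : PolyB N := if 0 ≤ n then SpB α n.toNat else 0

lemma coefF_def (α : Fin N → ℤ) (c : ℤ) (ℓ : AddMonoidAlgebra (PolyB N) ℤ) :
    coefF α c ℓ = Finsupp.sum (ℓ).coeff (fun e p => Tb α (c - e) * p) := rfl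

lemma coefF_zero (α : Fin N → ℤ) (c : ℤ) : coefF α c 0 = 0 := by
  rw [coefF_def]; exact Finsupp.sum_zero_index

lemma coefF_single (α : Fin N → ℤ) (c : ℤ) (e : ℤ) (p : PolyB N) :
    coefF α c (AddMonoidAlgebra.single e p) = Tb α (c - e) * p := by
  rw [coefF_def]
  exact Finsupp.sum_single_index (by rw [mul_zero])

lemma coefF_add (α : Fin N → ℤ) (c : ℤ) (ℓ₁ ℓ₂ : AddMonoidAlgebra (PolyB N) ℤ) :
    coefF α c (ℓ₁ + ℓ₂) = coefF α c ℓ₁ + coefF α c ℓ₂ := by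
  rw [coefF_def, coefF_def, coefF_def]
  exact Finsupp.sum_add_index' (fun e => mul_zero _) (fun e p q => mul_add _ _ _)

/-- `coefF` as an additive monoid hom. -/
def coefFHom (α : Fin N → ℤ) (c : ℤ) : AddMonoidAlgebra (PolyB N) ℤ →+ PolyB N where
  toFun := coefF α c
  map_zero' := coefF_zero α c
  map_add' := coefF_add α c

lemma coefF_single_zero_mul (α : Fin N → ℤ) (c : ℤ) (q : PolyB N)
    (ℓ : AddMonoidAlgebra (PolyB N) ℤ) :
    coefF α c (AddMonoidAlgebra.single 0 q * ℓ) = q * coefF α c ℓ := by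
  induction ℓ using AddMonoidAlgebra.induction_linear with
  | zero => rw [mul_zero, coefF_zero, mul_zero]
  | add f g hf hg => rw [mul_add, coefF_add, coefF_add, hf, hg, mul_add]
  | single e p =>
      rw [AddMonoidAlgebra.single_mul_single, zero_add, coefF_single, coefF_single,
        mul_left_comm]

end VCAux
namespace VCAux
variable {N : ℕ}

lemma single_sum {ι : Type*} (s : Finset ι) (f : ι → PolyB N) :
    (AddMonoidAlgebra.single 0 (∑ i ∈ s, f i) : AddMonoidAlgebra (PolyB N) ℤ)
      = ∑ i ∈ s, AddMonoidAlgebra.single 0 (f i) :=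
  map_sum (AddMonoidAlgebra.singleAddHom 0) _ _

lemma single_smul (c : ℂ) (p : PolyB N) :
    (AddMonoidAlgebra.single 0 (c • p) : AddMonoidAlgebra (PolyB N) ℤ)
      = c • AddMonoidAlgebra.single 0 p :=
  (AddMonoidAlgebra.smul_single c 0 p).symm

lemma sigmaA_X_inl (α : Fin N → ℤ) (i : Fin N) (j : ℕ) :
    sigmaA α (X (Sum.inl i, j)) = AddMonoidAlgebra.single 0 (X (Sum.inl i, j)) := by
  rw [sigmaA, aeval_X]
  simp

lemma sigmaA_Pa (α β : Fin N → ℤ) (j : ℕ) :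
    sigmaA α (Pa β j) = AddMonoidAlgebra.single 0 (Pa β j) := by
  rw [Pa, map_sum, single_sum]
  refine Finset.sum_congr rfl fun i _ => ?_
  rw [map_smul, sigmaA_X_inl, single_smul]

lemma sigmaA_SpB (α β : Fin N → ℤ) (p : ℕ) :
    sigmaA α (SpB β p) = AddMonoidAlgebra.single 0 (SpB β p) := by
  induction p using Nat.strong_induction_on with
  | _ p ih =>
    match p with
    | 0 =>
        rw [SpB]
        exact map_one _ |>.trans (by rw [show (1 : AddMonoidAlgebra (PolyB N) ℤ)
          = AddMonoidAlgebra.single 0 1 from rfl])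
    | p + 1 =>
        rw [SpB, map_smul, map_sum, single_smul, single_sum]
        congr 1
        refine Finset.sum_congr rfl fun j hj => ?_
        rw [map_mul, sigmaA_Pa, ih (p - j) (by omega), AddMonoidAlgebra.single_mul_single,
          zero_add]

lemma sigmaA_Tb (α β : Fin N → ℤ) (n : ℤ) :
    sigmaA α (Tb β n) = AddMonoidAlgebra.single 0 (Tb β n) := by
  rw [Tb]
  split_ifs
  · exact sigmaA_SpB α β _
  · rw [map_zero]; exact (AddMonoidAlgebra.single_zero 0).symm

end VCAux
namespace VCAux
variable {N : ℕ}

/-- The joint two-variable annihilation exponential. -/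
def Phi (α β : Fin N → ℤ) : PolyB N →ₐ[ℂ] AddMonoidAlgebra (PolyB N) (ℤ × ℤ) :=
  aeval fun v =>
    AddMonoidAlgebra.single 0 (X v) -
      (match v with
        | (Sum.inl _, _) => 0
        | (Sum.inr i, k) =>
            if k = 0 then 0
            else AddMonoidAlgebra.single ((-(k : ℤ), 0) : ℤ × ℤ) (C (α i : ℂ))
               + AddMonoidAlgebra.single ((0, -(k : ℤ)) : ℤ × ℤ) (C (β i : ℂ)))

/-- `sigmaA β` followed by the embedding into the second exponent coordinate. -/
def embR (β : Fin N → ℤ) : PolyB N →ₐ[ℂ] AddMonoidAlgebra (PolyB N) (ℤ × ℤ) :=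
  (AddMonoidAlgebra.mapDomainAlgHom ℂ (PolyB N) (AddMonoidHom.inr ℤ ℤ)).comp (sigmaA β)

/-- The exponent monomials in the first coordinate. -/
def gmon : Multiplicative ℤ →* AddMonoidAlgebra (PolyB N) (ℤ × ℤ) :=
  (AddMonoidAlgebra.of (PolyB N) (ℤ × ℤ)).comp
    (AddMonoidHom.toMultiplicative (AddMonoidHom.inl ℤ ℤ))

/-- Apply `sigmaA β` to each coefficient of a Laurent polynomial, putting the new
exponents in the second coordinate. -/
def Comb (β : Fin N → ℤ) :
    AddMonoidAlgebra (PolyB N) ℤ →ₐ[ℂ] AddMonoidAlgebra (PolyB N) (ℤ × ℤ) :=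
  AddMonoidAlgebra.liftNCAlgHom (embR β) gmon (fun _ _ => Commute.all _ _)

lemma comb_single (β : Fin N → ℤ) (g : ℤ) (p : PolyB N) :
    Comb β (AddMonoidAlgebra.single g p)
      = embR β p * AddMonoidAlgebra.single ((g, 0) : ℤ × ℤ) 1 := by
  have h1 : Comb β (AddMonoidAlgebra.single g p)
      = embR β p * gmon (Multiplicative.ofAdd g) :=
    AddMonoidAlgebra.liftNC_single _ _ _ _
  rw [h1]
  congr 1

lemma comb_apply (β : Fin N → ℤ) (ℓ : AddMonoidAlgebra (PolyB N) ℤ) (e f : ℤ) :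
    (Comb β ℓ).coeff (e, f)
      = (sigmaA β ((ℓ).coeff e)).coeff f := by
  induction ℓ using AddMonoidAlgebra.induction_linear with
  | zero => simp
  | add g h hg hh =>
      rw [map_add]
      rw [show (Comb β g + Comb β h).coeff (e, f)
            = (Comb β g).coeff (e, f)
              + (Comb β h).coeff (e, f) from rfl]
      rw [hg, hh]
      rw [show ((g + h).coeff e) = (g).coeff e
            + (h).coeff e from rfl, map_add]
      rfl
  | single g p =>
      rw [comb_single]
      rw [AddMonoidAlgebra.coeff_mul_single_apply, ← sub_eq_add_neg]
      rw [mul_one]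
      by_cases hge : e = g
      · subst hge
        rw [show ((e,f) - (e,0) : ℤ×ℤ) = (AddMonoidHom.inr ℤ ℤ) f from by simp]
        rw [show (embR β p).coeff ((AddMonoidHom.inr ℤ ℤ) f)
              = (sigmaA β p).coeff f from
            Finsupp.mapDomain_apply (fun a b hab => by simpa using congrArg Prod.snd hab) _ _]
        rw [show ((AddMonoidAlgebra.single e p).coeff e) = p from
          Finsupp.single_eq_same]
      · rw [show (embR β p).coeff ((e,f) - (g,0)) = 0 from
            Finsupp.mapDomain_notin_range _ _ (by
              rintro ⟨a, ha⟩
              apply hge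
              have := congrArg Prod.fst ha
              simp at this
              omega)]
        rw [show ((AddMonoidAlgebra.single g p).coeff e) = 0 from
          Finsupp.single_eq_of_ne (fun h => hge h)]
        rw [map_zero]
        rfl

end VCAux
namespace VCAux
variable {N : ℕ}

lemma sigmaA_C (β : Fin N → ℤ) (a : ℂ) :
    sigmaA β (C a) = AddMonoidAlgebra.single 0 (C a) := by
  rw [sigmaA, aeval_C]
  rfl

lemma mapDomainAlgHom_single (a : ℤ) (b : PolyB N) :
    AddMonoidAlgebra.mapDomainAlgHom ℂ (PolyB N) (AddMonoidHom.inr ℤ ℤ)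
      (AddMonoidAlgebra.single a b) = AddMonoidAlgebra.single ((0, a) : ℤ × ℤ) b := by
  rw [show AddMonoidAlgebra.mapDomainAlgHom ℂ (PolyB N) (AddMonoidHom.inr ℤ ℤ)
        (AddMonoidAlgebra.single a b)
      = AddMonoidAlgebra.mapDomain (AddMonoidHom.inr ℤ ℤ) (AddMonoidAlgebra.single a b) from rfl]
  rw [AddMonoidAlgebra.mapDomain_single]
  rfl

lemma comb_sigma (α β : Fin N → ℤ) :
    (Comb β).comp (sigmaA α) = Phi α β := by
  apply MvPolynomial.algHom_ext
  intro v
  rw [AlgHom.comp_apply]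
  rw [show sigmaA α (X v) = AddMonoidAlgebra.single 0 (X v) -
      (match v with
        | (Sum.inl _, _) => 0
        | (Sum.inr i, k) =>
            if k = 0 then 0
            else AddMonoidAlgebra.single (-(k : ℤ)) (C (α i : ℂ))) from by
    rw [sigmaA, aeval_X]]
  rw [show Phi α β (X v) = AddMonoidAlgebra.single 0 (X v) -
      (match v with
        | (Sum.inl _, _) => 0
        | (Sum.inr i, k) =>
            if k = 0 then 0
            else AddMonoidAlgebra.single ((-(k : ℤ), 0) : ℤ × ℤ) (C (α i : ℂ))
               + AddMonoidAlgebra.single ((0, -(k : ℤ)) : ℤ × ℤ) (C (β i : ℂ))) from by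
    rw [Phi, aeval_X]]
  have hM : ∀ x : PolyB N, embR β x
      = AddMonoidAlgebra.mapDomainAlgHom ℂ (PolyB N) (AddMonoidHom.inr ℤ ℤ) (sigmaA β x) :=
    fun _ => rfl
  obtain ⟨i | i, k⟩ := v
  · rw [sub_zero, sub_zero, comb_single, hM, sigmaA_X_inl, mapDomainAlgHom_single,
      AddMonoidAlgebra.single_mul_single, mul_one]
    rfl
  · by_cases hk : k = 0
    · subst hk
      simp only [if_true]
      rw [sub_zero, sub_zero, comb_single, hM]
      rw [show sigmaA β (X (Sum.inr i, 0)) = AddMonoidAlgebra.single 0 (X (Sum.inr i, 0)) from by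
        rw [sigmaA, aeval_X]; simp]
      rw [mapDomainAlgHom_single, AddMonoidAlgebra.single_mul_single, mul_one]
      rfl
    · simp only [if_neg hk]
      rw [map_sub, comb_single, comb_single, hM, hM]
      rw [show sigmaA β (X (Sum.inr i, k)) = AddMonoidAlgebra.single 0 (X (Sum.inr i, k))
            - AddMonoidAlgebra.single (-(k : ℤ)) (C (β i : ℂ)) from by
        rw [sigmaA, aeval_X]; simp [hk]]
      rw [sigmaA_C, map_sub, mapDomainAlgHom_single, mapDomainAlgHom_single,
        mapDomainAlgHom_single]
      rw [sub_mul, AddMonoidAlgebra.single_mul_single, AddMonoidAlgebra.single_mul_single,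
        AddMonoidAlgebra.single_mul_single, mul_one, mul_one, mul_one]
      rw [show (((0 : ℤ), (0 : ℤ)) + ((-(k : ℤ)), (0 : ℤ))) = ((-(k : ℤ), 0) : ℤ × ℤ) from by
        simp]
      rw [show (((0 : ℤ), (0 : ℤ)) + ((0 : ℤ), (0 : ℤ))) = ((0, 0) : ℤ × ℤ) from by simp]
      rw [show (((0 : ℤ), -(k : ℤ)) + ((0 : ℤ), (0 : ℤ))) = ((0, -(k : ℤ)) : ℤ × ℤ) from by
        simp]
      rw [show (AddMonoidAlgebra.single ((0, 0) : ℤ × ℤ) (X (Sum.inr i, k)))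
          = AddMonoidAlgebra.single (0 : ℤ × ℤ) (X (Sum.inr i, k)) from rfl]
      rw [sub_sub, add_comm]
end VCAux
namespace VCAux
variable {N : ℕ}

lemma phi_comm (α β : Fin N → ℤ) :
    (AddMonoidAlgebra.domCongr ℂ (PolyB N)
        (AddEquiv.prodComm : ℤ × ℤ ≃+ ℤ × ℤ)).toAlgHom.comp (Phi α β) = Phi β α := by
  apply MvPolynomial.algHom_ext
  intro v
  rw [AlgHom.comp_apply, AlgEquiv.toAlgHom_apply]
  rw [show Phi α β (X v) = AddMonoidAlgebra.single 0 (X v) -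
      (match v with
        | (Sum.inl _, _) => 0
        | (Sum.inr i, k) =>
            if k = 0 then 0
            else AddMonoidAlgebra.single ((-(k : ℤ), 0) : ℤ × ℤ) (C (α i : ℂ))
               + AddMonoidAlgebra.single ((0, -(k : ℤ)) : ℤ × ℤ) (C (β i : ℂ))) from by
    rw [Phi, aeval_X]]
  rw [show Phi β α (X v) = AddMonoidAlgebra.single 0 (X v) -
      (match v with
        | (Sum.inl _, _) => 0
        | (Sum.inr i, k) =>
            if k = 0 then 0
            else AddMonoidAlgebra.single ((-(k : ℤ), 0) : ℤ × ℤ) (C (β i : ℂ))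
               + AddMonoidAlgebra.single ((0, -(k : ℤ)) : ℤ × ℤ) (C (α i : ℂ))) from by
    rw [Phi, aeval_X]]
  obtain ⟨i | i, k⟩ := v
  · rw [sub_zero, AddMonoidAlgebra.domCongr_single]
    rfl
  · by_cases hk : k = 0
    · subst hk
      simp only [if_true]
      rw [sub_zero, AddMonoidAlgebra.domCongr_single]
      rfl
    · simp only [if_neg hk]
      rw [map_sub, map_add, AddMonoidAlgebra.domCongr_single, AddMonoidAlgebra.domCongr_single,
        AddMonoidAlgebra.domCongr_single]
      rw [show ((AddEquiv.prodComm : ℤ × ℤ ≃+ ℤ × ℤ) ((-(k : ℤ), 0) : ℤ × ℤ))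
          = ((0, -(k : ℤ)) : ℤ × ℤ) from rfl]
      rw [show ((AddEquiv.prodComm : ℤ × ℤ ≃+ ℤ × ℤ) ((0, -(k : ℤ)) : ℤ × ℤ))
          = ((-(k : ℤ), 0) : ℤ × ℤ) from rfl]
      rw [show ((AddEquiv.prodComm : ℤ × ℤ ≃+ ℤ × ℤ) (0 : ℤ × ℤ)) = (0 : ℤ × ℤ) from rfl]
      rw [add_comm]

lemma phi_swap (α β : Fin N → ℤ) (u : PolyB N) (e f : ℤ) :
    (Phi α β u).coeff (e, f)
      = (Phi β α u).coeff (f, e) := by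
  have h := DFunLike.congr_fun (phi_comm α β) u
  rw [AlgHom.comp_apply] at h
  rw [← h]
  rw [show ((AddMonoidAlgebra.domCongr ℂ (PolyB N)
      (AddEquiv.prodComm : ℤ × ℤ ≃+ ℤ × ℤ)).toAlgHom (Phi α β u)) =
    (AddMonoidAlgebra.domCongr ℂ (PolyB N)
      (AddEquiv.prodComm : ℤ × ℤ ≃+ ℤ × ℤ)) (Phi α β u) from rfl]
  rw [AddMonoidAlgebra.coeff_domCongr]
  rfl

/-- The key symmetry: extracting the `β`-coefficient then the `α`-coefficient is
symmetric. -/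
lemma key (α β : Fin N → ℤ) (u : PolyB N) (e f : ℤ) :
    (sigmaA α ((sigmaA β u).coeff e)).coeff f
      = (sigmaA β ((sigmaA α u).coeff f)).coeff e := by
  have h1 : (sigmaA α ((sigmaA β u).coeff e)).coeff f
      = (Comb α (sigmaA β u)).coeff (e, f) :=
    (comb_apply α (sigmaA β u) e f).symm
  have h2 : (sigmaA β ((sigmaA α u).coeff f)).coeff e
      = (Comb β (sigmaA α u)).coeff (f, e) :=
    (comb_apply β (sigmaA α u) f e).symm
  rw [h1, h2]
  have h3 : Comb α (sigmaA β u) = Phi β α u := by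
    have h := DFunLike.congr_fun (comb_sigma β α) u
    rwa [AlgHom.comp_apply] at h
  have h4 : Comb β (sigmaA α u) = Phi α β u := by
    have h := DFunLike.congr_fun (comb_sigma α β) u
    rwa [AlgHom.comp_apply] at h
  rw [h3, h4]
  exact phi_swap β α u e f

end VCAux
namespace VCAux
variable {N : ℕ}

lemma step (α β : Fin N → ℤ) (c₁ c₂ : ℤ) (ℓ : AddMonoidAlgebra (PolyB N) ℤ) :
    coefF α c₁ (sigmaA α (coefF β c₂ ℓ)) =
      Finsupp.sum (ℓ).coeff
        (fun e p => Tb β (c₂ - e) *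
          Finsupp.sum (sigmaA α p).coeff
            (fun f q => Tb α (c₁ - f) * q)) := by
  induction ℓ using AddMonoidAlgebra.induction_linear with
  | zero =>
      rw [coefF_zero, map_zero, coefF_zero]
      exact (Finsupp.sum_zero_index).symm
  | add g h hg hh =>
      rw [coefF_add, map_add, coefF_add, hg, hh]
      exact (Finsupp.sum_add_index'
        (fun e => by rw [map_zero, AddMonoidAlgebra.coeff_zero, Finsupp.sum_zero_index, mul_zero])
        (fun e p q => by rw [map_add, AddMonoidAlgebra.coeff_add, Finsupp.sum_add_index'
            (fun f => mul_zero _) (fun f a b => mul_add _ _ _), mul_add])).symm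
  | single g p =>
      rw [coefF_single, map_mul, sigmaA_Tb, coefF_single_zero_mul]
      rw [AddMonoidAlgebra.coeff_single, Finsupp.sum_single_index
        (by rw [map_zero, AddMonoidAlgebra.coeff_zero, Finsupp.sum_zero_index, mul_zero])]
      rw [coefF_def]

lemma double_sum_swap (T1 T2 : ℤ → PolyB N) (A B : ℤ →₀ PolyB N)
    (G H : PolyB N → ℤ →₀ PolyB N)
    (hG0 : G 0 = 0) (hH0 : H 0 = 0)
    (hkey : ∀ e f, (G (B e)) f = (H (A f)) e) :
    (B.sum fun e p => T2 e * ((G p).sum fun f q => T1 f * q))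
      = A.sum fun f q => T1 f * ((H q).sum fun e r => T2 e * r) := by
  classical
  set F : Finset ℤ := A.support ∪ B.support.biUnion (fun e => (G (B e)).support) with hF
  set E : Finset ℤ := B.support ∪ A.support.biUnion (fun f => (H (A f)).support) with hE
  have hBs : B.support ⊆ E := Finset.subset_union_left
  have hAs : A.support ⊆ F := Finset.subset_union_left
  have hGs : ∀ e, (G (B e)).support ⊆ F := by
    intro e
    by_cases hb : e ∈ B.support
    · exact (Finset.subset_biUnion_of_mem (fun e => (G (B e)).support) hb).trans Finset.subset_union_right
    · rw [Finsupp.notMem_support_iff.mp hb, hG0]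
      simp
  have hHs : ∀ f, (H (A f)).support ⊆ E := by
    intro f
    by_cases ha : f ∈ A.support
    · exact (Finset.subset_biUnion_of_mem (fun f => (H (A f)).support) ha).trans Finset.subset_union_right
    · rw [Finsupp.notMem_support_iff.mp ha, hH0]
      simp
  rw [Finsupp.sum_of_support_subset B hBs _
    (fun i _ => by rw [hG0, Finsupp.sum_zero_index, mul_zero])]
  rw [Finsupp.sum_of_support_subset A hAs _
    (fun i _ => by rw [hH0, Finsupp.sum_zero_index, mul_zero])]
  have h1 : ∀ e ∈ E, T2 e * ((G (B e)).sum fun f q => T1 f * q)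
      = ∑ f ∈ F, T2 e * (T1 f * (G (B e)) f) := by
    intro e _
    rw [Finsupp.sum_of_support_subset _ (hGs e) _ (fun i _ => mul_zero _), Finset.mul_sum]
  have h2 : ∀ f ∈ F, T1 f * ((H (A f)).sum fun e r => T2 e * r)
      = ∑ e ∈ E, T1 f * (T2 e * (H (A f)) e) := by
    intro f _
    rw [Finsupp.sum_of_support_subset _ (hHs f) _ (fun i _ => mul_zero _), Finset.mul_sum]
  rw [Finset.sum_congr rfl h1, Finset.sum_congr rfl h2, Finset.sum_comm]
  refine Finset.sum_congr rfl fun f _ => Finset.sum_congr rfl fun e _ => ?_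
  rw [hkey e f, mul_left_comm]

lemma core (α β : Fin N → ℤ) (c₁ c₂ : ℤ) (u : PolyB N) :
    coefF α c₁ (sigmaA α (coefF β c₂ (sigmaA β u)))
      = coefF β c₂ (sigmaA β (coefF α c₁ (sigmaA α u))) := by
  rw [step α β c₁ c₂ (sigmaA β u), step β α c₂ c₁ (sigmaA α u)]
  exact double_sum_swap (fun f => Tb α (c₁ - f)) (fun e => Tb β (c₂ - e))
    (sigmaA α u).coeff (sigmaA β u).coeff
    (fun p => (sigmaA α p).coeff)
    (fun q => (sigmaA β q).coeff)
    (by exact congrArg AddMonoidAlgebra.coeff (map_zero (sigmaA α)))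
    (by exact congrArg AddMonoidAlgebra.coeff (map_zero (sigmaA β)))
    (fun e f => key α β u e f)

end VCAux
namespace VCAux
variable {N : ℕ}

lemma XopF_single (α : Fin N → ℤ) (m : ℤ) (γ : Gam N) (u : PolyB N) :
    XopF α m (Finsupp.single γ u)
      = Finsupp.single (γ + incQ α) (coefF α (-m - pairQ γ α) (sigmaA α u)) := by
  rw [XopF]
  exact Finsupp.sum_single_index (by rw [map_zero, coefF_zero, Finsupp.single_zero])

lemma XopF_add (α : Fin N → ℤ) (m : ℤ) (v w : VGam N) :
    XopF α m (v + w) = XopF α m v + XopF α m w := by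
  rw [XopF, XopF, XopF]
  exact Finsupp.sum_add_index'
    (fun γ => by rw [map_zero, coefF_zero, Finsupp.single_zero])
    (fun γ p q => by rw [map_add, coefF_add, Finsupp.single_add])

lemma pairQ_add_incQ (γ : Gam N) (δ α : Fin N → ℤ) :
    pairQ (γ + incQ δ) α = pairQ γ α := by
  unfold pairQ incQ
  refine Finset.sum_congr rfl fun i _ => ?_
  simp

end VCAux


/-- For `α, β ∈ Q` (so `⟨α,β⟩ = 0`) and all `m, k ∈ ℤ`, the vertex
operator components commute: `[X_m(α), X_k(β)] = 0` on `V(Γ)`. -/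
theorem vertex_components_commute {N : ℕ}
    (α β : Fin N → ℤ) (m k : ℤ) :
    ∀ v : VGam N, XopF α m (XopF β k v) = XopF β k (XopF α m v) := by
  intro v
  induction v using Finsupp.induction_linear with
  | zero =>
      have hb : XopF β k (0 : VGam N) = 0 := Finsupp.sum_zero_index
      have ha : XopF α m (0 : VGam N) = 0 := Finsupp.sum_zero_index
      rw [hb, ha, hb]
  | add f g hf hg =>
      rw [VCAux.XopF_add, VCAux.XopF_add, VCAux.XopF_add, VCAux.XopF_add, hf, hg]
  | single γ u =>
      rw [VCAux.XopF_single, VCAux.XopF_single, VCAux.XopF_single, VCAux.XopF_single,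
        VCAux.pairQ_add_incQ, VCAux.pairQ_add_incQ, add_right_comm,
        VCAux.core α β (-m - pairQ γ α) (-k - pairQ γ β) u]


end
end

section
/- For α ∈ Q, the component identity T^α_{m}(α) + m X_m(α) = 0 holds for all m ∈ ℤ, where T^h(α,z) = h⁻(z)X(α,z) + X(α,z)h⁺(z) = Σ_k T^h_k(α) z^{−k−1}. -/
open MvPolynomial

noncomputable section

variable {N : ℕ}

/-! ### Auxiliary development -/

section Aux

variable {N : ℕ}

/-- Laurent polynomials over `S(𝔟₋)`. -/
abbrev AA (N : ℕ) := AddMonoidAlgebra (PolyB N) ℤ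

/-- The coefficient `S_d` with the convention `S_d = 0` for `d < 0`. -/
def gS (α : Fin N → ℤ) (d : ℤ) : PolyB N := if 0 ≤ d then SpB α d.toNat else 0

lemma coefF_def (α : Fin N → ℤ) (c : ℤ) (ℓ : AA N) :
    coefF α c ℓ = Finsupp.sum (show ℤ →₀ PolyB N from ℓ.coeff) (fun e p => gS α (c - e) * p) := rfl

lemma coefF_single (α : Fin N → ℤ) (c e : ℤ) (p : PolyB N) :
    coefF α c (AddMonoidAlgebra.single e p) = gS α (c - e) * p := by
  rw [coefF_def, AddMonoidAlgebra.coeff_single]; exact Finsupp.sum_single_index (by simp)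

lemma coefF_zero (α : Fin N → ℤ) (c : ℤ) : coefF α c 0 = 0 := by
  rw [coefF_def, AddMonoidAlgebra.coeff_zero]; exact Finsupp.sum_zero_index

lemma coefF_add (α : Fin N → ℤ) (c : ℤ) (ℓ₁ ℓ₂ : AA N) :
    coefF α c (ℓ₁ + ℓ₂) = coefF α c ℓ₁ + coefF α c ℓ₂ := by
  simp only [coefF_def, AddMonoidAlgebra.coeff_add]
  exact Finsupp.sum_add_index' (by simp) (by intro e p q; rw [mul_add])

lemma coefF_smul (α : Fin N → ℤ) (c : ℤ) (r : ℂ) (ℓ : AA N) :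
    coefF α c (r • ℓ) = r • coefF α c ℓ := by
  simp only [coefF_def, AddMonoidAlgebra.coeff_smul]
  rw [Finsupp.sum_smul_index' (by simp)]
  rw [Finsupp.smul_sum]
  exact Finsupp.sum_congr (fun e _ => mul_smul_comm r _ _)

lemma coefF_finset_sum {ι : Type*} (α : Fin N → ℤ) (c : ℤ) (s : Finset ι) (f : ι → AA N) :
    coefF α c (∑ i ∈ s, f i) = ∑ i ∈ s, coefF α c (f i) := by
  classical
  induction s using Finset.induction_on with
  | empty => simp [coefF_zero]
  | insert _ _ h ih => rw [Finset.sum_insert h, Finset.sum_insert h, coefF_add, ih]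

lemma coefF_finsupp_sum {ι M : Type*} [Zero M] (α : Fin N → ℤ) (c : ℤ) (f : ι →₀ M)
    (g : ι → M → AA N) :
    coefF α c (Finsupp.sum f g) = Finsupp.sum f (fun i x => coefF α c (g i x)) :=
  coefF_finset_sum α c _ _

lemma AA_induction {N : ℕ} {p : AA N → Prop} (f : AA N) (h0 : p 0)
    (hadd : ∀ f g : AA N, p f → p g → p (f + g))
    (hsingle : ∀ (a : ℤ) (b : PolyB N), p (AddMonoidAlgebra.single a b)) : p f :=
  AddMonoidAlgebra.induction_linear (motive := p) f h0 hadd hsingle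

lemma coefF_single' (α : Fin N → ℤ) (c e : ℤ) (p : PolyB N) :
    coefF α c (AddMonoidAlgebra.single e p) = gS α (c - e) * p := coefF_single α c e p

lemma coefF_mul_single (α : Fin N → ℤ) (c d : ℤ) (ℓ : AA N) (p : PolyB N) :
    coefF α c (ℓ * AddMonoidAlgebra.single d p) = coefF α (c - d) ℓ * p := by
  induction ℓ using AA_induction with
  | h0 => rw [zero_mul, coefF_zero, coefF_zero, zero_mul]
  | hadd f g hf hg => rw [add_mul, coefF_add, hf, hg, coefF_add, add_mul]
  | hsingle e q =>
      rw [AddMonoidAlgebra.single_mul_single, coefF_single', coefF_single', mul_assoc]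
      congr 2
      omega

/-- The operator `z d/dz` on Laurent polynomials. -/
def Zd (ℓ : AA N) : AA N :=
  Finsupp.sum (show ℤ →₀ PolyB N from ℓ.coeff) fun e p => AddMonoidAlgebra.single e ((e : ℂ) • p)

lemma Zd_single (e : ℤ) (p : PolyB N) :
    Zd (AddMonoidAlgebra.single e p : AA N) = AddMonoidAlgebra.single e ((e : ℂ) • p) := by
  unfold Zd; rw [AddMonoidAlgebra.coeff_single]; exact Finsupp.sum_single_index (by simp)

lemma Zd_zero : Zd (0 : AA N) = 0 := by
  unfold Zd; rw [AddMonoidAlgebra.coeff_zero]; exact Finsupp.sum_zero_index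

lemma Zd_add (ℓ₁ ℓ₂ : AA N) : Zd (ℓ₁ + ℓ₂) = Zd ℓ₁ + Zd ℓ₂ := by
  unfold Zd
  rw [AddMonoidAlgebra.coeff_add]
  exact Finsupp.sum_add_index' (by simp) (by intro e p q; rw [smul_add, AddMonoidAlgebra.single_add])

lemma Zd_smul (r : ℂ) (ℓ : AA N) : Zd (r • ℓ) = r • Zd ℓ := by
  unfold Zd
  rw [AddMonoidAlgebra.coeff_smul]
  rw [Finsupp.sum_smul_index' (by simp)]
  rw [Finsupp.smul_sum]
  refine Finsupp.sum_congr fun e _ => ?_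
  rw [smul_comm, AddMonoidAlgebra.smul_single]

lemma Zd_finset_sum {ι : Type*} (s : Finset ι) (f : ι → AA N) :
    Zd (∑ i ∈ s, f i) = ∑ i ∈ s, Zd (f i) := by
  classical
  induction s using Finset.induction_on with
  | empty => simp [Zd_zero]
  | insert _ _ h ih => rw [Finset.sum_insert h, Finset.sum_insert h, Zd_add, ih]

lemma coefF_Zd (α : Fin N → ℤ) (c : ℤ) (ℓ : AA N) :
    coefF α c (Zd ℓ) =
      Finsupp.sum (show ℤ →₀ PolyB N from ℓ.coeff) (fun e p => gS α (c - e) * ((e : ℂ) • p)) := by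
  unfold Zd
  rw [coefF_finsupp_sum]
  exact Finsupp.sum_congr fun e _ => coefF_single α c e _

lemma Zd_mul (x y : AA N) : Zd (x * y) = x * Zd y + y * Zd x := by
  induction x using AA_induction with
  | h0 => rw [zero_mul, Zd_zero, zero_mul, mul_zero, add_zero]
  | hadd f g hf hg =>
      rw [add_mul, Zd_add, hf, hg, Zd_add]
      ring
  | hsingle a p =>
      induction y using AA_induction with
      | h0 => rw [mul_zero, Zd_zero, mul_zero, zero_mul, add_zero]
      | hadd f g hf hg =>
          rw [mul_add, Zd_add, hf, hg, Zd_add]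
          ring
      | hsingle b q =>
          rw [AddMonoidAlgebra.single_mul_single, Zd_single, Zd_single, Zd_single,
            AddMonoidAlgebra.single_mul_single, AddMonoidAlgebra.single_mul_single,
            show b + a = a + b from add_comm b a, ← AddMonoidAlgebra.single_add]
          congr 1
          push_cast
          rw [add_smul, mul_smul_comm, mul_smul_comm, mul_comm q p, add_comm]

lemma Zd_neg (ℓ : AA N) : Zd (-ℓ) = -Zd ℓ := by
  have := Zd_smul (N := N) (-1 : ℂ) ℓ
  simpa using this

lemma Zd_sub (ℓ₁ ℓ₂ : AA N) : Zd (ℓ₁ - ℓ₂) = Zd ℓ₁ - Zd ℓ₂ := by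
  rw [sub_eq_add_neg, Zd_add, Zd_neg, sub_eq_add_neg]

lemma AA_smul_single (r : ℂ) (a : ℤ) (b : PolyB N) :
    r • (AddMonoidAlgebra.single a b : AA N) = AddMonoidAlgebra.single a (r • b) :=
  AddMonoidAlgebra.smul_single r a b

lemma AA_single_neg (a : ℤ) (b : PolyB N) :
    (AddMonoidAlgebra.single a (-b) : AA N) = -AddMonoidAlgebra.single a b :=
  AddMonoidAlgebra.single_neg a b

/-- `z d/dz` applied to the image of the variable `dᵢ(−k)` under `exp T₊(α,z)`. -/
def Zf (α : Fin N → ℤ) (i : Fin N) (k : ℕ) : AA N :=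
  (k : ℂ) • AddMonoidAlgebra.single (-(k : ℤ)) (C (α i : ℂ))

lemma Zd_sigmaA_X (α : Fin N → ℤ) (v : TVar N) :
    Zd (sigmaA α (X v)) =
      (match v with
        | (Sum.inl _, _) => 0
        | (Sum.inr i, k) => if k = 0 then 0 else Zf α i k) := by
  rw [show sigmaA α (X v) = _ from aeval_X _ v]
  match v with
  | (Sum.inl i, k) =>
      show Zd (AddMonoidAlgebra.single 0 (X (Sum.inl i, k)) - 0) = 0
      rw [sub_zero, Zd_single]; simp
  | (Sum.inr i, 0) =>
      show Zd (AddMonoidAlgebra.single 0 (X (Sum.inr i, 0)) - 0) = 0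
      rw [sub_zero, Zd_single]; simp
  | (Sum.inr i, k + 1) =>
      show Zd (AddMonoidAlgebra.single 0 (X (Sum.inr i, k + 1)) -
          AddMonoidAlgebra.single (-((k + 1 : ℕ) : ℤ)) (C ((α i : ℂ)))) = Zf α i (k + 1)
      rw [Zd_sub, Zd_single, Zd_single, Zf]
      push_cast
      rw [AA_smul_single, zero_smul, AddMonoidAlgebra.single_zero, zero_sub,
        show (-((k : ℂ) + 1)) • C ((α i : ℂ)) = -(((k : ℂ) + 1) • C ((α i : ℂ))) from
          neg_smul _ _,
        AA_single_neg, neg_neg]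

/-- Chain rule: `z d/dz` of `exp T₊(α,z) u`. -/
lemma Zd_sigmaA (α : Fin N → ℤ) (K : ℕ) (u : PolyB N)
    (hu : u ∈ supported ℂ {v : TVar N | v.2 ≤ K}) :
    Zd (sigmaA α u) =
      ∑ j ∈ Finset.range K, ∑ i,
        sigmaA α (pderiv (Sum.inr i, j + 1) u) * Zf α i (j + 1) := by
  rw [supported] at hu
  induction hu using Algebra.adjoin_induction with
  | mem x hx =>
      obtain ⟨v, hv, rfl⟩ := hx
      rw [Zd_sigmaA_X]
      match v, hv with
      | (Sum.inl i0, k), _ =>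
          symm
          refine Finset.sum_eq_zero fun j _ => Finset.sum_eq_zero fun i _ => ?_
          rw [pderiv_X_of_ne (by simp), map_zero, zero_mul]
      | (Sum.inr i0, 0), _ =>
          show (0 : AA N) = _
          symm
          refine Finset.sum_eq_zero fun j _ => Finset.sum_eq_zero fun i _ => ?_
          rw [pderiv_X_of_ne (by simp), map_zero, zero_mul]
      | (Sum.inr i0, k + 1), hv =>
          show Zf α i0 (k + 1) = _
          have hkK : k < K := by
            have : k + 1 ≤ K := hv
            omega
          symm
          rw [Finset.sum_eq_single k]
          · rw [Finset.sum_eq_single i0]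
            · rw [pderiv_X_self, map_one, one_mul]
            · intro i _ hi
              rw [pderiv_X_of_ne (by simp [Ne.symm hi]), map_zero, zero_mul]
            · intro h; exact absurd (Finset.mem_univ i0) h
          · intro j _ hj
            refine Finset.sum_eq_zero fun i _ => ?_
            rw [pderiv_X_of_ne (by simp; omega), map_zero, zero_mul]
          · intro h; exact absurd (Finset.mem_range.2 hkK) h
  | algebraMap r =>
      rw [AlgHom.commutes]
      rw [show (algebraMap ℂ (AA N)) r = AddMonoidAlgebra.single 0 (algebraMap ℂ (PolyB N) r)
            from congrFun AddMonoidAlgebra.coe_algebraMap r, Zd_single]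
      refine Eq.trans (by simp) (Finset.sum_eq_zero fun j _ => Finset.sum_eq_zero fun i _ => ?_).symm
      rw [show (algebraMap ℂ (MvPolynomial (TVar N) ℂ)) r = C r from rfl, pderiv_C, map_zero,
        zero_mul]
  | add x y hx hy ihx ihy =>
      rw [map_add, Zd_add, ihx, ihy, ← Finset.sum_add_distrib]
      refine Finset.sum_congr rfl fun j _ => ?_
      rw [← Finset.sum_add_distrib]
      refine Finset.sum_congr rfl fun i _ => ?_
      rw [map_add, map_add, add_mul]
  | mul x y hx hy ihx ihy =>
      rw [map_mul, Zd_mul, ihx, ihy, Finset.mul_sum, Finset.mul_sum, ← Finset.sum_add_distrib]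
      refine Finset.sum_congr rfl fun j _ => ?_
      rw [Finset.mul_sum, Finset.mul_sum, ← Finset.sum_add_distrib]
      refine Finset.sum_congr rfl fun i _ => ?_
      rw [(pderiv (Sum.inr i, j + 1)).leibniz, smul_eq_mul, smul_eq_mul, map_add, map_mul,
        map_mul, add_mul, mul_assoc, mul_assoc]

lemma SpB_rec (α : Fin N → ℤ) (p : ℕ) :
    ((p : ℂ) + 1) • SpB α (p + 1) = ∑ j ∈ Finset.range (p + 1), Pa α (j + 1) * SpB α (p - j) := by
  rw [SpB, smul_smul, mul_inv_cancel₀ (Nat.cast_add_one_ne_zero p), one_smul]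

lemma gS_rec (α : Fin N → ℤ) (d : ℤ) (K : ℕ) (h : d ≤ (K : ℤ)) :
    (d : ℂ) • gS α d = ∑ k ∈ Finset.range K, Pa α (k + 1) * gS α (d - ((k + 1 : ℕ) : ℤ)) := by
  rcases lt_or_ge d 1 with hd | hd
  · rw [Finset.sum_eq_zero (fun k _ => by rw [gS, if_neg (by omega), mul_zero])]
    rcases eq_or_ne d 0 with rfl | hd0
    · simp
    · rw [gS, if_neg (by omega), smul_zero]
  · obtain ⟨p, rfl⟩ : ∃ p : ℕ, d = (p : ℤ) + 1 := ⟨(d - 1).toNat, by omega⟩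
    have hgs : gS α ((p : ℤ) + 1) = SpB α (p + 1) := by
      rw [gS, if_pos (by omega), show ((p : ℤ) + 1).toNat = p + 1 by omega]
    have hK : p + 1 ≤ K := by omega
    rw [hgs, show ((((p : ℤ) + 1) : ℤ) : ℂ) = (p : ℂ) + 1 by push_cast; ring, SpB_rec]
    rw [show (∑ j ∈ Finset.range (p + 1), Pa α (j + 1) * SpB α (p - j))
          = ∑ j ∈ Finset.range (p + 1),
              Pa α (j + 1) * gS α ((p : ℤ) + 1 - ((j + 1 : ℕ) : ℤ)) from
        Finset.sum_congr rfl fun j hj => by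
          have hj' : j < p + 1 := Finset.mem_range.1 hj
          rw [gS, if_pos (by omega)]
          congr 2
          omega]
    exact Finset.sum_subset (Finset.range_subset_range.2 hK)
      (fun k _ hk => by
        have hk' : ¬ k < p + 1 := fun h' => hk (Finset.mem_range.2 h')
        rw [gS, if_neg (by omega), mul_zero])

/-- The operator `α(j)` (for `j = n > 0`) on `S(𝔟₋)`. -/
def Dop (α : Fin N → ℤ) (n : ℕ) (u : PolyB N) : PolyB N :=
  ∑ i, ((n : ℂ) * (α i : ℂ)) • pderiv (Sum.inr i, n) u

lemma key_identity (α : Fin N → ℤ) (c : ℤ) (u : PolyB N) (K : ℕ)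
    (hK1 : ∀ e ∈ (show ℤ →₀ PolyB N from (sigmaA α u).coeff).support, c - e ≤ (K : ℤ))
    (hK2 : u ∈ supported ℂ {v : TVar N | v.2 ≤ K}) :
    (∑ k ∈ Finset.range K, Pa α (k + 1) * coefF α (c - ((k + 1 : ℕ) : ℤ)) (sigmaA α u))
      + ∑ k ∈ Finset.range K, coefF α (c + ((k + 1 : ℕ) : ℤ)) (sigmaA α (Dop α (k + 1) u))
      = (c : ℂ) • coefF α c (sigmaA α u) := by
  have step1 : (c : ℂ) • coefF α c (sigmaA α u)
      = Finsupp.sum (show ℤ →₀ PolyB N from (sigmaA α u).coeff)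
          (fun e p => (((c - e : ℤ) : ℂ) • gS α (c - e)) * p)
        + coefF α c (Zd (sigmaA α u)) := by
    rw [coefF_Zd, coefF_def, Finsupp.smul_sum, ← Finsupp.sum_add]
    refine Finsupp.sum_congr fun e _ => ?_
    rw [smul_mul_assoc, mul_smul_comm, ← add_smul]
    congr 1
    push_cast
    ring
  have step2 : Finsupp.sum (show ℤ →₀ PolyB N from (sigmaA α u).coeff)
      (fun e p => (((c - e : ℤ) : ℂ) • gS α (c - e)) * p)
      = ∑ k ∈ Finset.range K, Pa α (k + 1) * coefF α (c - ((k + 1 : ℕ) : ℤ)) (sigmaA α u) := by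
    have e1 : Finsupp.sum (show ℤ →₀ PolyB N from (sigmaA α u).coeff)
        (fun e p => (((c - e : ℤ) : ℂ) • gS α (c - e)) * p)
        = Finsupp.sum (show ℤ →₀ PolyB N from (sigmaA α u).coeff)
            (fun e p => ∑ k ∈ Finset.range K,
              Pa α (k + 1) * (gS α (c - ((k + 1 : ℕ) : ℤ) - e) * p)) :=
      Finsupp.sum_congr fun e he => by
        rw [gS_rec α (c - e) K (hK1 e he), Finset.sum_mul]
        exact Finset.sum_congr rfl fun k _ => by
          rw [mul_assoc, show c - e - ((k + 1 : ℕ) : ℤ) = c - ((k + 1 : ℕ) : ℤ) - e by ring]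
    rw [e1, Finsupp.sum, Finset.sum_comm]
    refine Finset.sum_congr rfl fun k _ => ?_
    rw [coefF_def, Finsupp.sum, Finset.mul_sum]
  have step3 : coefF α c (Zd (sigmaA α u))
      = ∑ k ∈ Finset.range K, coefF α (c + ((k + 1 : ℕ) : ℤ)) (sigmaA α (Dop α (k + 1) u)) := by
    rw [Zd_sigmaA α K u hK2, coefF_finset_sum]
    refine Finset.sum_congr rfl fun j _ => ?_
    rw [coefF_finset_sum, Dop, map_sum, coefF_finset_sum]
    refine Finset.sum_congr rfl fun i _ => ?_
    rw [Zf, mul_smul_comm, coefF_smul, coefF_mul_single, sub_neg_eq_add,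
      map_smul, coefF_smul,
      show coefF α (c + ((j + 1 : ℕ) : ℤ)) (sigmaA α (pderiv (Sum.inr i, j + 1) u))
            * C ((α i : ℂ))
          = (α i : ℂ) • coefF α (c + ((j + 1 : ℕ) : ℤ)) (sigmaA α (pderiv (Sum.inr i, j + 1) u))
        from by rw [mul_comm, ← smul_eq_C_mul], smul_smul]
  rw [step1, step2, step3]

/-! #### Operator-level lemmas -/

lemma XopF_single (α : Fin N → ℤ) (m : ℤ) (γ : Gam N) (u : PolyB N) :
    XopF α m (Finsupp.single γ u)
      = Finsupp.single (γ + incQ α) (coefF α (-m - pairQ γ α) (sigmaA α u)) := by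
  unfold XopF
  exact Finsupp.sum_single_index (by rw [map_zero, coefF_zero, Finsupp.single_zero])

lemma XopF_zero (α : Fin N → ℤ) (m : ℤ) : XopF α m (0 : VGam N) = 0 :=
  Finsupp.sum_zero_index

lemma XopF_add (α : Fin N → ℤ) (m : ℤ) (v w : VGam N) :
    XopF α m (v + w) = XopF α m v + XopF α m w :=
  Finsupp.sum_add_index' (fun γ => by rw [map_zero, coefF_zero, Finsupp.single_zero])
    (fun γ u u' => by rw [map_add, coefF_add, Finsupp.single_add])

lemma popF_zero (b : (Fin N → ℂ) × (Fin N → ℂ)) (k : ℤ) : popF b k (0 : VGam N) = 0 :=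
  Finsupp.sum_zero_index

lemma popF_add (b : (Fin N → ℂ) × (Fin N → ℂ)) (k : ℤ) (v w : VGam N) :
    popF b k (v + w) = popF b k v + popF b k w := by
  refine Finsupp.sum_add_index' (fun γ => ?_) (fun γ u u' => ?_)
  · split_ifs <;> simp
  · split_ifs <;>
      simp [mul_add, smul_add, map_add, Finsupp.single_add, Finset.sum_add_distrib] <;>
      abel

lemma sum_Icc_neg {M : Type*} [AddCommMonoid M] (C : ℕ) (f : ℤ → M) :
    ∑ j ∈ Finset.Icc (-(C : ℤ)) (-1 : ℤ), f j
      = ∑ k ∈ Finset.range C, f (-((k + 1 : ℕ) : ℤ)) := by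
  refine Finset.sum_nbij' (fun j => (-j - 1).toNat) (fun k => -((k : ℤ)) - 1)
    ?_ ?_ ?_ ?_ ?_
  · intro a ha
    simp only [Finset.mem_Icc] at ha
    simp only [Finset.mem_range]
    beta_reduce
    omega
  · intro a ha
    simp only [Finset.mem_range] at ha
    simp only [Finset.mem_Icc]
    beta_reduce
    omega
  · intro a ha
    simp only [Finset.mem_Icc] at ha
    beta_reduce
    omega
  · intro a ha
    simp only [Finset.mem_range] at ha
    beta_reduce
    omega
  · intro a ha
    simp only [Finset.mem_Icc] at ha
    beta_reduce
    congr 1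
    omega

lemma sum_Icc_pos {M : Type*} [AddCommMonoid M] (C : ℕ) (f : ℤ → M) :
    ∑ j ∈ Finset.Icc (1 : ℤ) (C : ℤ), f j
      = ∑ k ∈ Finset.range C, f ((k + 1 : ℕ) : ℤ) := by
  refine Finset.sum_nbij' (fun j => (j - 1).toNat) (fun k => (k : ℤ) + 1)
    ?_ ?_ ?_ ?_ ?_
  · intro a ha
    simp only [Finset.mem_Icc] at ha
    simp only [Finset.mem_range]
    beta_reduce
    omega
  · intro a ha
    simp only [Finset.mem_range] at ha
    simp only [Finset.mem_Icc]
    beta_reduce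
    omega
  · intro a ha
    simp only [Finset.mem_Icc] at ha
    beta_reduce
    omega
  · intro a ha
    simp only [Finset.mem_range] at ha
    beta_reduce
    omega
  · intro a ha
    simp only [Finset.mem_Icc] at ha
    beta_reduce
    congr 1
    omega

lemma Icc_zero_insert (C : ℕ) :
    Finset.Icc (0 : ℤ) (C : ℤ) = insert (0 : ℤ) (Finset.Icc (1 : ℤ) (C : ℤ)) := by
  ext x
  simp only [Finset.mem_Icc, Finset.mem_insert]
  omega

lemma popF_neg_single (α : Fin N → ℤ) (j : ℤ) (hj : j < 0) (γ' : Gam N) (q : PolyB N) :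
    popF (toP α) j (Finsupp.single γ' q) = Finsupp.single γ' (Pa α (-j).toNat * q) := by
  unfold popF
  rw [Finsupp.sum_single_index (by rw [if_pos hj, mul_zero, Finsupp.single_zero]), if_pos hj]
  congr 2
  rw [Pa]
  refine Finset.sum_congr rfl fun i _ => ?_
  show (α i : ℂ) • X (Sum.inl i, (-j).toNat) + (0 : ℂ) • X (Sum.inr i, (-j).toNat) = _
  rw [zero_smul, add_zero]

lemma popF_zero_single (α : Fin N → ℤ) (γ : Gam N) (u : PolyB N) :
    popF (toP α) 0 (Finsupp.single γ u)
      = Finsupp.single γ (((pairQ γ α : ℤ) : ℂ) • u) := by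
  unfold popF
  rw [Finsupp.sum_single_index (by rw [if_neg (lt_irrefl 0), if_pos rfl, smul_zero,
    Finsupp.single_zero]), if_neg (lt_irrefl 0), if_pos rfl]
  congr 2
  rw [pairQ]
  push_cast
  refine Finset.sum_congr rfl fun i _ => ?_
  show (γ.1 i : ℂ) * (0 : ℂ) + (γ.2 i : ℂ) * (α i : ℂ) = _
  ring

lemma popF_pos_single (α : Fin N → ℤ) (k : ℕ) (γ : Gam N) (u : PolyB N) :
    popF (toP α) ((k + 1 : ℕ) : ℤ) (Finsupp.single γ u)
      = Finsupp.single γ (Dop α (k + 1) u) := by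
  have h1 : ¬ ((k + 1 : ℕ) : ℤ) < 0 := by omega
  have h2 : ((k + 1 : ℕ) : ℤ) ≠ 0 := by omega
  unfold popF
  rw [Finsupp.sum_single_index (by rw [if_neg h1, if_neg h2]; simp), if_neg h1, if_neg h2]
  congr 1
  rw [Dop]
  refine Finset.sum_congr rfl fun i _ => ?_
  show ((((k + 1 : ℕ) : ℤ) : ℂ) * (0 : ℂ)) • pderiv (Sum.inl i, ((k + 1 : ℕ) : ℤ).toNat) u
      + ((((k + 1 : ℕ) : ℤ) : ℂ) * (α i : ℂ)) • pderiv (Sum.inr i, ((k + 1 : ℕ) : ℤ).toNat) u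
      = _
  rw [mul_zero, zero_smul, zero_add, show ((k + 1 : ℕ) : ℤ).toNat = k + 1 by omega]
  push_cast
  rfl

lemma single_case (α : Fin N → ℤ) (m : ℤ) (γ : Gam N) (u : PolyB N) :
    ∃ B0 : ℕ, ∀ C : ℕ, B0 ≤ C →
      (∑ j ∈ Finset.Icc (-(C : ℤ)) (-1 : ℤ),
          popF (toP α) j (XopF α (m - j) (Finsupp.single γ u)))
        + (∑ j ∈ Finset.Icc (0 : ℤ) (C : ℤ),
            XopF α (m - j) (popF (toP α) j (Finsupp.single γ u)))
        + (m : ℂ) • XopF α m (Finsupp.single γ u) = 0 := by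
  set c : ℤ := -m - pairQ γ α with hc
  refine ⟨max ((show ℤ →₀ PolyB N from (sigmaA α u).coeff).support.sup fun e => (c - e).toNat)
      (u.vars.sup Prod.snd), fun C hC => ?_⟩
  have hK1 : ∀ e ∈ (show ℤ →₀ PolyB N from (sigmaA α u).coeff).support, c - e ≤ (C : ℤ) := by
    intro e he
    have h1 : (c - e).toNat ≤ C :=
      le_trans (le_trans (Finset.le_sup (f := fun e => (c - e).toNat) he) (le_max_left _ _)) hC
    omega
  have hK2 : u ∈ supported ℂ {v : TVar N | v.2 ≤ C} := by
    refine supported_mono ?_ (mem_supported_vars u)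
    intro v hv
    exact le_trans (le_trans (Finset.le_sup hv) (le_max_right _ _)) hC
  have hkey := key_identity α c u C hK1 hK2
  have hsum1 : (∑ j ∈ Finset.Icc (-(C : ℤ)) (-1 : ℤ),
        popF (toP α) j (XopF α (m - j) (Finsupp.single γ u)))
      = Finsupp.single (γ + incQ α)
          (∑ k ∈ Finset.range C,
            Pa α (k + 1) * coefF α (c - ((k + 1 : ℕ) : ℤ)) (sigmaA α u)) := by
    rw [sum_Icc_neg,
      show (Finsupp.single (γ + incQ α)
          (∑ k ∈ Finset.range C,
            Pa α (k + 1) * coefF α (c - ((k + 1 : ℕ) : ℤ)) (sigmaA α u)) : VGam N)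
        = ∑ k ∈ Finset.range C, Finsupp.single (γ + incQ α)
            (Pa α (k + 1) * coefF α (c - ((k + 1 : ℕ) : ℤ)) (sigmaA α u)) from
        map_sum (Finsupp.singleAddHom (γ + incQ α)) _ _]
    refine Finset.sum_congr rfl fun k _ => ?_
    rw [XopF_single, popF_neg_single α _ (by omega)]
    show Finsupp.single (γ + incQ α) _ = Finsupp.single (γ + incQ α) _
    refine congrArg (Finsupp.single (γ + incQ α)) ?_
    rw [show (-(-((k + 1 : ℕ) : ℤ))).toNat = k + 1 by omega,
      show -(m - -((k + 1 : ℕ) : ℤ)) - pairQ γ α = c - ((k + 1 : ℕ) : ℤ) by omega]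
  have hsum2 : (∑ j ∈ Finset.Icc (0 : ℤ) (C : ℤ),
        XopF α (m - j) (popF (toP α) j (Finsupp.single γ u)))
      = Finsupp.single (γ + incQ α)
          (((pairQ γ α : ℤ) : ℂ) • coefF α c (sigmaA α u)
            + ∑ k ∈ Finset.range C,
                coefF α (c + ((k + 1 : ℕ) : ℤ)) (sigmaA α (Dop α (k + 1) u))) := by
    rw [Icc_zero_insert, Finset.sum_insert (by simp), Finsupp.single_add]
    congr 1
    · rw [popF_zero_single, XopF_single, map_smul, coefF_smul,
        show -(m - 0) - pairQ γ α = c by omega]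
    · rw [sum_Icc_pos,
        show (Finsupp.single (γ + incQ α)
            (∑ k ∈ Finset.range C,
              coefF α (c + ((k + 1 : ℕ) : ℤ)) (sigmaA α (Dop α (k + 1) u))) : VGam N)
          = ∑ k ∈ Finset.range C, Finsupp.single (γ + incQ α)
              (coefF α (c + ((k + 1 : ℕ) : ℤ)) (sigmaA α (Dop α (k + 1) u))) from
          map_sum (Finsupp.singleAddHom (γ + incQ α)) _ _]
      refine Finset.sum_congr rfl fun k _ => ?_
      rw [popF_pos_single, XopF_single]
      show Finsupp.single (γ + incQ α) _ = Finsupp.single (γ + incQ α) _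
      refine congrArg (Finsupp.single (γ + incQ α)) ?_
      rw [show -(m - ((k + 1 : ℕ) : ℤ)) - pairQ γ α = c + ((k + 1 : ℕ) : ℤ) by omega]
  rw [hsum1, hsum2, XopF_single, Finsupp.smul_single, ← Finsupp.single_add,
    ← Finsupp.single_add]
  rw [show -m - pairQ γ α = c from rfl]
  rw [show (∑ k ∈ Finset.range C,
        Pa α (k + 1) * coefF α (c - ((k + 1 : ℕ) : ℤ)) (sigmaA α u))
      + (((pairQ γ α : ℤ) : ℂ) • coefF α c (sigmaA α u)
          + ∑ k ∈ Finset.range C,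
              coefF α (c + ((k + 1 : ℕ) : ℤ)) (sigmaA α (Dop α (k + 1) u)))
      + (m : ℂ) • coefF α c (sigmaA α u)
      = ((∑ k ∈ Finset.range C,
            Pa α (k + 1) * coefF α (c - ((k + 1 : ℕ) : ℤ)) (sigmaA α u))
          + ∑ k ∈ Finset.range C,
              coefF α (c + ((k + 1 : ℕ) : ℤ)) (sigmaA α (Dop α (k + 1) u)))
        + (((pairQ γ α : ℤ) : ℂ) + (m : ℂ)) • coefF α c (sigmaA α u) by
      rw [add_smul]; abel]
  rw [hkey, ← add_smul, show ((c : ℤ) : ℂ) + (((pairQ γ α : ℤ) : ℂ) + (m : ℂ)) = 0 by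
    rw [hc]; push_cast; ring, zero_smul, Finsupp.single_zero]

end Aux

/-- For `α ∈ Q`, the component identity `T^α_m(α) + m·X_m(α) = 0` holds
for all `m ∈ ℤ`, where `T^h(α,z) = h⁻(z)X(α,z) + X(α,z)h⁺(z) = Σ_k T^h_k(α) z^{−k−1}`
with `h⁺(z) = Σ_{j≥0} h(j)z^{−j−1}`, `h⁻(z) = Σ_{j<0} h(j)z^{−j−1}`.  In components
(the sums being locally finite): for every `m` and every vector `v`,
`Σ_{j<0} α(j)X_{m−j}(α)v + Σ_{j≥0} X_{m−j}(α)(α(j)v) + m·X_m(α)v = 0`. -/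
theorem T_component_identity {N : ℕ} (α : Fin N → ℤ) (m : ℤ) (v : VGam N) :
    ∃ B0 : ℕ, ∀ C : ℕ, B0 ≤ C →
      (∑ j ∈ Finset.Icc (-(C : ℤ)) (-1 : ℤ), popF (toP α) j (XopF α (m - j) v))
        + (∑ j ∈ Finset.Icc (0 : ℤ) (C : ℤ), XopF α (m - j) (popF (toP α) j v))
        + (m : ℂ) • XopF α m v = 0 := by
  induction v using Finsupp.induction_linear with
  | zero =>
      refine ⟨0, fun C _ => ?_⟩
      simp only [XopF_zero, popF_zero, Finset.sum_const_zero, smul_zero, add_zero, zero_add]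
  | add f g hf hg =>
      obtain ⟨B1, h1⟩ := hf
      obtain ⟨B2, h2⟩ := hg
      refine ⟨max B1 B2, fun C hC => ?_⟩
      have e1 := h1 C (le_trans (le_max_left _ _) hC)
      have e2 := h2 C (le_trans (le_max_right _ _) hC)
      simp only [XopF_add, popF_add, Finset.sum_add_distrib, smul_add]
      rw [show ((∑ j ∈ Finset.Icc (-(C : ℤ)) (-1 : ℤ), popF (toP α) j (XopF α (m - j) f))
            + ∑ j ∈ Finset.Icc (-(C : ℤ)) (-1 : ℤ), popF (toP α) j (XopF α (m - j) g))
          + ((∑ j ∈ Finset.Icc (0 : ℤ) (C : ℤ), XopF α (m - j) (popF (toP α) j f))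
            + ∑ j ∈ Finset.Icc (0 : ℤ) (C : ℤ), XopF α (m - j) (popF (toP α) j g))
          + ((m : ℂ) • XopF α m f + (m : ℂ) • XopF α m g)
          = ((∑ j ∈ Finset.Icc (-(C : ℤ)) (-1 : ℤ), popF (toP α) j (XopF α (m - j) f))
              + (∑ j ∈ Finset.Icc (0 : ℤ) (C : ℤ), XopF α (m - j) (popF (toP α) j f))
              + (m : ℂ) • XopF α m f)
            + ((∑ j ∈ Finset.Icc (-(C : ℤ)) (-1 : ℤ), popF (toP α) j (XopF α (m - j) g))
              + (∑ j ∈ Finset.Icc (0 : ℤ) (C : ℤ), XopF α (m - j) (popF (toP α) j g))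
              + (m : ℂ) • XopF α m g) from by abel,
        e1, e2, add_zero]
  | single γ u => exact single_case α m γ u

end
end

section
/- GL(n,ℤ) acts by automorphisms on the toroidal Lie (super)algebra τ̃: for B ∈ GL(n,ℤ), the map defined by B·(X⊗t^m̄) = X⊗t^{B·m̄}, B·(d(t^m̄)t^k̄) = d(t^{B·m̄})t^{B·k̄}, and B·dᵢ = dᵢ' where (d₁',…,d_n') = (Bᵀ)^{−1}(d₁,…,d_n), preserves the Lie bracket of τ̃. -/
open Matrix

noncomputable section

section TauTilde

variable {io : Type} [Fintype io] [DecidableEq io]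

/-- The span of the symbols `t^m̄ Kᵢ`, `i ∈ ι`, `m̄ ∈ ℤⁿ`. -/
abbrev WOm (io : Type) := ((io → ℤ) × io) →₀ ℂ

/-- The subspace `d_A` spanned by the elements `Σᵢ mᵢ t^m̄ Kᵢ`. -/
def relW (io : Type) [Fintype io] : Submodule ℂ (WOm io) :=
  Submodule.span ℂ
    {w : WOm io | ∃ m : io → ℤ, w = ∑ i, (m i : ℂ) • Finsupp.single (m, i) 1}

/-- The space of differentials `Ω_A/d_A`. -/
abbrev Om (io : Type) [Fintype io] := WOm io ⧸ relW io

/-- The class of `t^m̄ Kᵢ` in `Ω_A/d_A`. -/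
def tK (m : io → ℤ) (i : io) : Om io :=
  Submodule.Quotient.mk (Finsupp.single (m, i) 1)

/-- The element `d(t^m̄)·t^k̄ = Σᵢ mᵢ t^{m̄+k̄} Kᵢ` of `Ω_A/d_A`. -/
def dtk (m k : io → ℤ) : Om io :=
  Submodule.Quotient.mk (∑ i, (m i : ℂ) • Finsupp.single (m + k, i) 1)

/-- The full toroidal algebra `τ̃ = g⊗A ⊕ Ω_A/d_A ⊕ D`; the `D`-part records the
coefficients of the derivations `d₁,…,d_n`. -/
abbrev TauT (io : Type) [Fintype io] (V : Type) [AddCommGroup V] [Module ℂ V] :=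
  ((io → ℤ) →₀ V) × Om io × (io → ℂ)

variable {V : Type} [AddCommGroup V] [Module ℂ V]

/-- The action `[Σᵢ cᵢdᵢ, X(m̄)] = (Σᵢ cᵢmᵢ)·X(m̄)` of the derivations on `g ⊗ A`. -/
def dact (d : io → ℂ) (f : (io → ℤ) →₀ V) : (io → ℤ) →₀ V :=
  Finsupp.sum f fun m x => Finsupp.single m ((∑ i, d i * (m i : ℂ)) • x)

/-- The action `[Σᵢcᵢdᵢ, t^l̄ Kⱼ] = (Σᵢcᵢlᵢ)·t^l̄ Kⱼ` of the derivations on `Ω_A`. -/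
def dactW (d : io → ℂ) : WOm io →ₗ[ℂ] WOm io :=
  Finsupp.lsum ℂ fun p => (∑ i, d i * (p.1 i : ℂ)) • Finsupp.lsingle p

/-- The derivation action descends to `Ω_A/d_A`. -/
def dactO (d : io → ℂ) : Om io →ₗ[ℂ] Om io :=
  Submodule.mapQ _ _ (dactW d) (by
    rw [relW, Submodule.span_le]
    rintro w ⟨m, rfl⟩
    have h : (dactW d) (∑ i, (m i : ℂ) • Finsupp.single (m, i) 1)
        = (∑ j, d j * (m j : ℂ)) • ∑ i, (m i : ℂ) • Finsupp.single (m, i) (1 : ℂ) := by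
      rw [map_sum, Finset.smul_sum]
      refine Finset.sum_congr rfl fun i _ => ?_
      simp only [_root_.map_smul, dactW, Finsupp.lsum_single, LinearMap.smul_apply,
        Finsupp.lsingle_apply]
      rw [smul_comm]
    simp only [SetLike.mem_coe, Submodule.mem_comap, h]
    exact Submodule.smul_mem _ _ (Submodule.subset_span ⟨m, rfl⟩))

/-- The toroidal bracket on `τ̃`:
`[X(m̄), Y(k̄)] = [X,Y](m̄+k̄) + (X,Y) Σᵢ mᵢ t^{m̄+k̄}Kᵢ`, `Ω_A/d_A` central in `τ`,
`[dᵢ, X(m̄)] = mᵢ X(m̄)`, `[dᵢ, t^l̄Kⱼ] = lᵢ t^l̄Kⱼ`, `[dᵢ, dⱼ] = 0`. -/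
def brT (br : V →ₗ[ℂ] V →ₗ[ℂ] V) (Bf : V →ₗ[ℂ] V →ₗ[ℂ] ℂ)
    (p q : TauT io V) : TauT io V :=
  ( (Finsupp.sum p.1 fun m x => Finsupp.sum q.1 fun k y => Finsupp.single (m + k) (br x y))
      + dact p.2.2 q.1 - dact q.2.2 p.1,
    (Finsupp.sum p.1 fun m x => Finsupp.sum q.1 fun k y => Bf x y • dtk m k)
      + dactO p.2.2 q.2.1 - dactO q.2.2 p.2.1,
    0 )

/-- The action of `B ∈ GL(n,ℤ)` on `Ω_A`: `t^l̄ Kᵢ ↦ Σⱼ b_{ij} t^{B·l̄} Kⱼ`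
(equivalently `d(t^m̄)t^k̄ ↦ d(t^{B·m̄})t^{B·k̄}`). -/
def PhiW (B : Matrix io io ℤ) : WOm io →ₗ[ℂ] WOm io :=
  Finsupp.lsum ℂ fun p => ∑ j, ((B p.2 j : ℂ)) • Finsupp.lsingle (p.1 ᵥ* B, j)

/-- The `GL(n,ℤ)`-action preserves the relations `Σᵢ mᵢ t^m̄ Kᵢ = 0` and hence
descends to `Ω_A/d_A`. -/
def PhiO (B : Matrix io io ℤ) : Om io →ₗ[ℂ] Om io :=
  Submodule.mapQ _ _ (PhiW B) (by
    rw [relW, Submodule.span_le]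
    rintro w ⟨m, rfl⟩
    have h : (PhiW B) (∑ i, (m i : ℂ) • Finsupp.single (m, i) 1)
        = ∑ j, (((m ᵥ* B) j : ℂ)) • Finsupp.single (m ᵥ* B, j) (1 : ℂ) := by
      rw [map_sum]
      simp only [_root_.map_smul, PhiW, Finsupp.lsum_single, LinearMap.sum_apply,
        LinearMap.smul_apply, Finsupp.lsingle_apply, Finset.smul_sum, smul_smul]
      rw [Finset.sum_comm]
      refine Finset.sum_congr rfl fun j _ => ?_
      rw [← Finset.sum_smul]
      congr 1
      simp only [Matrix.vecMul, dotProduct]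
      push_cast
      try rfl
    simp only [SetLike.mem_coe, Submodule.mem_comap, h]
    exact Submodule.subset_span ⟨m ᵥ* B, rfl⟩)

/-- The action of `B ∈ GL(n,ℤ)` (with inverse `B'`) on `τ̃`:
`X⊗t^m̄ ↦ X⊗t^{B·m̄}`, `d(t^m̄)t^k̄ ↦ d(t^{B·m̄})t^{B·k̄}`, and
`(d₁',…,d_n') = (Bᵀ)^{−1}(d₁,…,d_n)` on the derivations. -/
def PhiT (B B' : Matrix io io ℤ) (p : TauT io V) : TauT io V :=
  ( Finsupp.mapDomain (fun m => m ᵥ* B) p.1,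
    PhiO B p.2.1,
    (B'.map fun z : ℤ => (z : ℂ)) *ᵥ p.2.2 )

end TauTilde


section Helpers

variable {io : Type} [Fintype io] [DecidableEq io]
variable {V : Type} [AddCommGroup V] [Module ℂ V]

lemma key_sum (B B' : Matrix io io ℤ) (hBB' : B * B' = 1) (d : io → ℂ) (m : io → ℤ) :
    ∑ j, ((B'.map fun z : ℤ => (z : ℂ)) *ᵥ d) j * ((m ᵥ* B) j : ℂ) = ∑ i, d i * (m i : ℂ) := by
  have hcast : (fun j => ((m ᵥ* B) j : ℂ)) = (fun i => (m i : ℂ)) ᵥ* (B.map fun z : ℤ => (z : ℂ)) := by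
    funext j
    simp only [Matrix.vecMul, dotProduct, Matrix.map_apply]
    push_cast
    rfl
  have heq : ∑ j, ((B'.map fun z : ℤ => (z : ℂ)) *ᵥ d) j * ((m ᵥ* B) j : ℂ)
      = ((fun i => (m i : ℂ)) ᵥ* (B.map fun z : ℤ => (z : ℂ))) ⬝ᵥ ((B'.map fun z : ℤ => (z : ℂ)) *ᵥ d) := by
    simp only [dotProduct, ← hcast]
    exact Finset.sum_congr rfl fun j _ => mul_comm _ _
  have hmap : (B.map fun z : ℤ => (z : ℂ)) * (B'.map fun z : ℤ => (z : ℂ)) = 1 := by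
    ext i k
    have h2 := congrArg (fun M : Matrix io io ℤ => M i k) hBB'
    simp only [Matrix.mul_apply, Matrix.one_apply] at h2 ⊢
    simp only [Matrix.map_apply, ← Int.cast_mul, ← Int.cast_sum, h2]
    split <;> simp
  rw [heq, Matrix.dotProduct_mulVec, Matrix.vecMul_vecMul, hmap]
  simp [dotProduct, mul_comm]

/-- `dact` as a linear map. -/
def Ldact (d : io → ℂ) : ((io → ℤ) →₀ V) →ₗ[ℂ] ((io → ℤ) →₀ V) :=
  Finsupp.lsum ℂ fun m => (∑ i, d i * (m i : ℂ)) • Finsupp.lsingle m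

lemma dact_eq_Ldact (d : io → ℂ) (f : (io → ℤ) →₀ V) : dact d f = Ldact d f := by
  rw [dact, Ldact, Finsupp.lsum_apply]
  exact Finsupp.sum_congr fun m _ => by
    simp [Finsupp.smul_single]

lemma Ldact_comm (B B' : Matrix io io ℤ) (hBB' : B * B' = 1) (d : io → ℂ) :
    (Finsupp.lmapDomain V ℂ (fun m => m ᵥ* B)).comp (Ldact d)
      = (Ldact ((B'.map fun z : ℤ => (z : ℂ)) *ᵥ d)).comp
          (Finsupp.lmapDomain V ℂ (fun m => m ᵥ* B)) := by
  refine Finsupp.lhom_ext fun m x => ?_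
  simp only [LinearMap.comp_apply, Ldact, Finsupp.lsum_single, LinearMap.smul_apply,
    Finsupp.lsingle_apply, Finsupp.lmapDomain_apply, _root_.map_smul,
    Finsupp.mapDomain_single, key_sum B B' hBB' d m]

lemma dact_mapDomain (B B' : Matrix io io ℤ) (hBB' : B * B' = 1) (d : io → ℂ)
    (f : (io → ℤ) →₀ V) :
    Finsupp.mapDomain (fun m => m ᵥ* B) (dact d f)
      = dact ((B'.map fun z : ℤ => (z : ℂ)) *ᵥ d) (Finsupp.mapDomain (fun m => m ᵥ* B) f) := by
  rw [dact_eq_Ldact, dact_eq_Ldact, ← Finsupp.lmapDomain_apply V ℂ,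
    ← Finsupp.lmapDomain_apply V ℂ, ← LinearMap.comp_apply, ← LinearMap.comp_apply,
    Ldact_comm B B' hBB' d]

lemma dactW_PhiW_comm (B B' : Matrix io io ℤ) (hBB' : B * B' = 1) (d : io → ℂ) :
    (PhiW B).comp (dactW (io := io) d)
      = (dactW ((B'.map fun z : ℤ => (z : ℂ)) *ᵥ d)).comp (PhiW B) := by
  refine Finsupp.lhom_ext fun p c => ?_
  simp only [LinearMap.comp_apply, dactW, PhiW, Finsupp.lsum_single, LinearMap.smul_apply,
    LinearMap.sum_apply, Finsupp.lsingle_apply, _root_.map_smul, map_sum]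
  rw [Finset.smul_sum]
  refine Finset.sum_congr rfl fun j _ => ?_
  simp only [_root_.map_smul, Finsupp.lsum_single, LinearMap.smul_apply, Finsupp.lsingle_apply,
    key_sum B B' hBB' d p.1]
  rw [smul_comm]

lemma dactO_PhiO_comm (B B' : Matrix io io ℤ) (hBB' : B * B' = 1) (d : io → ℂ)
    (w : Om io) :
    PhiO B (dactO d w) = dactO ((B'.map fun z : ℤ => (z : ℂ)) *ᵥ d) (PhiO B w) := by
  obtain ⟨w, rfl⟩ := Submodule.Quotient.mk_surjective _ w
  show PhiO B (dactO d (Submodule.Quotient.mk w)) = _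
  simp only [dactO, PhiO, Submodule.mapQ_apply]
  rw [← LinearMap.comp_apply, ← LinearMap.comp_apply, dactW_PhiW_comm B B' hBB' d]

lemma PhiO_mk (B : Matrix io io ℤ) (w : WOm io) :
    PhiO B (Submodule.Quotient.mk w) = Submodule.Quotient.mk (PhiW B w) := by
  simp only [PhiO, Submodule.mapQ_apply]

lemma vecMul_add' (m k : io → ℤ) (B : Matrix io io ℤ) :
    (m + k) ᵥ* B = m ᵥ* B + k ᵥ* B := by
  funext j
  simp [Matrix.vecMul, dotProduct, add_mul, Finset.sum_add_distrib]

lemma PhiO_dtk (B : Matrix io io ℤ) (m k : io → ℤ) :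
    PhiO B (dtk m k) = dtk (m ᵥ* B) (k ᵥ* B) := by
  rw [dtk, PhiO_mk, dtk]
  congr 1
  rw [map_sum]
  have step : ∀ i, PhiW B ((m i : ℂ) • Finsupp.single (m + k, i) (1 : ℂ))
      = ∑ j, ((m i : ℂ) * (B i j : ℂ)) • Finsupp.single (m ᵥ* B + k ᵥ* B, j) (1 : ℂ) := by
    intro i
    simp only [_root_.map_smul, PhiW, Finsupp.lsum_single, LinearMap.sum_apply,
      LinearMap.smul_apply, Finsupp.lsingle_apply, Finset.smul_sum, smul_smul,
      vecMul_add' m k B]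
  rw [Finset.sum_congr rfl fun i _ => step i, Finset.sum_comm]
  refine Finset.sum_congr rfl fun j _ => ?_
  rw [← Finset.sum_smul]
  congr 1
  simp only [Matrix.vecMul, dotProduct]
  push_cast
  rfl

end Helpers

/-- `GL(n,ℤ)` acts by automorphisms on the toroidal Lie (super)algebra
`τ̃`: for `B ∈ GL(n,ℤ)` (encoded by a pair of mutually inverse integer matrices
`B, B'`), the map `Φ_B` defined by `B·(X⊗t^m̄) = X⊗t^{B·m̄}`,
`B·(d(t^m̄)t^k̄) = d(t^{B·m̄})t^{B·k̄}` (which preserves the relations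
`Σᵢ mᵢ t^m̄ Kᵢ = 0`, as checked in the definition of `PhiO`), and
`B·dᵢ = dᵢ'` with `(d₁',…,d_n') = (Bᵀ)^{−1}(d₁,…,d_n)`, preserves the Lie bracket
of `τ̃`. -/
theorem GL_acts_by_automorphisms
    (io : Type) [Fintype io] [DecidableEq io]
    (V : Type) [AddCommGroup V] [Module ℂ V]
    (br : V →ₗ[ℂ] V →ₗ[ℂ] V) (Bf : V →ₗ[ℂ] V →ₗ[ℂ] ℂ)
    (B B' : Matrix io io ℤ) (hBB' : B * B' = 1) (hB'B : B' * B = 1) :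
    ∀ p q : TauT io V,
      PhiT B B' (brT br Bf p q) = brT br Bf (PhiT B B' p) (PhiT B B' q) := by
  intro p q
  set s : (io → ℤ) → (io → ℤ) := fun m => m ᵥ* B with hs
  set d1 : io → ℂ := (B'.map fun z : ℤ => (z : ℂ)) *ᵥ p.2.2 with hd1
  set d2 : io → ℂ := (B'.map fun z : ℤ => (z : ℂ)) *ᵥ q.2.2 with hd2
  refine Prod.ext ?_ (Prod.ext ?_ ?_)
  · -- first component
    show Finsupp.mapDomain s
        ((p.1.sum fun m x => q.1.sum fun k y => Finsupp.single (m + k) (br x y))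
          + dact p.2.2 q.1 - dact q.2.2 p.1)
      = ((Finsupp.mapDomain s p.1).sum fun m x =>
            (Finsupp.mapDomain s q.1).sum fun k y => Finsupp.single (m + k) (br x y))
          + dact d1 (Finsupp.mapDomain s q.1) - dact d2 (Finsupp.mapDomain s p.1)
    rw [← Finsupp.lmapDomain_apply V ℂ s, map_sub, map_add,
      Finsupp.lmapDomain_apply, Finsupp.lmapDomain_apply, Finsupp.lmapDomain_apply,
      dact_mapDomain B B' hBB', dact_mapDomain B B' hBB']
    congr 1
    congr 1
    have hL : Finsupp.mapDomain s
          (p.1.sum fun m x => q.1.sum fun k y => Finsupp.single (m + k) (br x y))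
        = p.1.sum fun m x => q.1.sum fun k y =>
            Finsupp.single (s m + s k) (br x y) := by
      rw [← Finsupp.lmapDomain_apply V ℂ s, map_finsuppSum]
      refine Finsupp.sum_congr fun m _ => ?_
      rw [map_finsuppSum]
      refine Finsupp.sum_congr fun k _ => ?_
      rw [Finsupp.lmapDomain_apply, Finsupp.mapDomain_single, hs]
      simp [vecMul_add']
    have hR : ((Finsupp.mapDomain s p.1).sum fun m x =>
          (Finsupp.mapDomain s q.1).sum fun k y => Finsupp.single (m + k) (br x y))
        = p.1.sum fun m x => q.1.sum fun k y =>
            Finsupp.single (s m + s k) (br x y) := by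
      rw [Finsupp.sum_mapDomain_index
        (by intro a; simp [Finsupp.sum_fun_zero])
        (by intro a b₁ b₂
            rw [← Finsupp.sum_add]
            exact Finsupp.sum_congr fun k _ => by
              simp [map_add, LinearMap.add_apply, Finsupp.single_add])]
      refine Finsupp.sum_congr fun m _ => ?_
      rw [Finsupp.sum_mapDomain_index (by intro a; simp)
        (by intro a b₁ b₂; simp [map_add, Finsupp.single_add])]
    rw [hL, hR]
  · -- second component
    show PhiO B
        ((p.1.sum fun m x => q.1.sum fun k y => Bf x y • dtk m k)
          + dactO p.2.2 q.2.1 - dactO q.2.2 p.2.1)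
      = ((Finsupp.mapDomain s p.1).sum fun m x =>
            (Finsupp.mapDomain s q.1).sum fun k y => Bf x y • dtk m k)
          + dactO d1 (PhiO B q.2.1) - dactO d2 (PhiO B p.2.1)
    rw [map_sub, map_add, dactO_PhiO_comm B B' hBB', dactO_PhiO_comm B B' hBB']
    congr 1
    congr 1
    have hL : PhiO B (p.1.sum fun m x => q.1.sum fun k y => Bf x y • dtk m k)
        = p.1.sum fun m x => q.1.sum fun k y => Bf x y • dtk (s m) (s k) := by
      rw [map_finsuppSum]
      refine Finsupp.sum_congr fun m _ => ?_
      rw [map_finsuppSum]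
      refine Finsupp.sum_congr fun k _ => ?_
      rw [_root_.map_smul, PhiO_dtk]
    have hR : ((Finsupp.mapDomain s p.1).sum fun m x =>
          (Finsupp.mapDomain s q.1).sum fun k y => Bf x y • dtk m k)
        = p.1.sum fun m x => q.1.sum fun k y => Bf x y • dtk (s m) (s k) := by
      rw [Finsupp.sum_mapDomain_index
        (by intro a; simp [Finsupp.sum_fun_zero])
        (by intro a b₁ b₂
            rw [← Finsupp.sum_add]
            exact Finsupp.sum_congr fun k _ => by
              simp [map_add, LinearMap.add_apply, add_smul])]
      refine Finsupp.sum_congr fun m _ => ?_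
      rw [Finsupp.sum_mapDomain_index (by intro a; simp)
        (by intro a b₁ b₂; simp [map_add, add_smul])]
    rw [hL, hR]
  · -- third component
    show (B'.map fun z : ℤ => (z : ℂ)) *ᵥ (0 : io → ℂ) = 0
    exact Matrix.mulVec_zero _
end
end
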